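/- Let K be a pure cubic number field, i.e., [K : ℚ] = 3 and K = ℚ(α) for some α ∈ K with α³ ∈ ℚ, and suppose the discriminant of K equals −3·f² for an even positive integer f. Then the prime 2 is totally ramified in K: there is a prime ideal 𝔭 of the ring of integers 𝒪_K with 2·𝒪_K = 𝔭³. -/

import Mathlib

open NumberField Polynomial IntermediateField Ideal

lemma exists_two_pow_mul_odd (N : ℤ) (h : N ≠ 0) :
    ∃ v : ℕ, ∃ w : ℤ, Odd w ∧ N = 2 ^ v * w := by
  set n := N.natAbs with hn'
  have hn : n ≠ 0 := Int.natAbs_ne_zero.mpr h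
  obtain ⟨v, m, h1, h2⟩ : ∃ v m, 2 ^ v * m = n ∧ ¬ 2 ∣ m :=
    ⟨n.factorization 2, n / 2 ^ n.factorization 2,
      Nat.ordProj_mul_ordCompl_eq_self n 2, Nat.not_dvd_ordCompl Nat.prime_two hn⟩
  have hodd : Odd ((m : ℕ) : ℤ) := by
    rw [Int.odd_coe_nat, Nat.odd_iff]
    omega
  refine ⟨v, ?_⟩
  rcases Int.natAbs_eq N with hE | hE
  · exact ⟨(m : ℤ), hodd, by rw [hE, ← hn', ← h1]; push_cast; ring⟩
  · exact ⟨-(m : ℤ), hodd.neg, by rw [hE, ← hn', ← h1]; push_cast; ring⟩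

lemma discr_dvd_of_basis (K : Type*) [Field K] [NumberField K] {ι : Type*} [Fintype ι]
    [DecidableEq ι] (b : Module.Basis ι ℚ K) (hint : ∀ i, IsIntegral ℤ (b i)) :
    ∃ r : ℤ, Algebra.discr ℚ ⇑b = ((r ^ 2 * NumberField.discr K : ℤ) : ℚ) := by
  classical
  set e := (integralBasis K).indexEquiv b with he
  set b0 := (integralBasis K).reindex e with hb0
  set P := b0.toMatrix ⇑b with hP
  have hPint : ∀ i j, IsIntegral ℤ (P i j) := by
    intro i j
    have hmem : b j = algebraMap (𝓞 K) K (show 𝓞 K from ⟨b j, hint j⟩) := rfl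
    rw [hP, Module.Basis.toMatrix_apply, hb0, Module.Basis.repr_reindex_apply, hmem,
      integralBasis_repr_apply]
    exact isIntegral_algebraMap
  have hdet : IsIntegral ℤ P.det := IsIntegral.det hPint
  obtain ⟨r, hr⟩ := IsIntegrallyClosed.isIntegral_iff.1 hdet
  refine ⟨r, ?_⟩
  have h1 : Algebra.discr ℚ ⇑b = P.det ^ 2 * Algebra.discr ℚ ⇑b0 := by
    rw [← Algebra.discr_of_matrix_vecMul ⇑b0 P, Module.Basis.toMatrix_map_vecMul]
  have h2 : Algebra.discr ℚ ⇑b0 = (NumberField.discr K : ℚ) := by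
    rw [hb0, Module.Basis.coe_reindex, Algebra.discr_reindex, ← NumberField.coe_discr]
  rw [h1, h2, ← hr]
  simp only [eq_intCast]
  push_cast
  ring

lemma discrK_dvd_of_cube (K : Type*) [Field K] [NumberField K]
    (hdeg : Module.finrank ℚ K = 3) (θ : K)
    (hθtop : IntermediateField.adjoin ℚ {θ} = ⊤) (w : ℤ) (h3 : θ ^ 3 = (w : K)) :
    (NumberField.discr K : ℤ) ∣ 27 * w ^ 2 := by
  have hint : IsIntegral ℤ θ :=
    ⟨X ^ 3 - C w, monic_X_pow_sub_C w (by norm_num),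
      by rw [eval₂_sub, eval₂_pow, eval₂_X, eval₂_C, h3]; simp⟩
  have hQint : IsIntegral ℚ θ := IsIntegral.of_finite ℚ θ
  let pb0 := IntermediateField.adjoin.powerBasis hQint
  let e : ℚ⟮θ⟯ ≃ₐ[ℚ] K := (IntermediateField.equivOfEq hθtop).trans IntermediateField.topEquiv
  let pb := pb0.map e
  have hgen : pb.gen = θ := rfl
  have hdim : pb.dim = 3 := by
    rw [← pb.finrank, hdeg]
  have hmondvd : minpoly ℚ θ ∣ X ^ 3 - C (w : ℚ) := by
    apply minpoly.dvd
    simp [h3]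
  have hdeg' : (minpoly ℚ θ).natDegree = 3 := by
    have := pb.natDegree_minpoly
    rwa [hgen, hdim] at this
  have hmp : minpoly ℚ θ = X ^ 3 - C (w : ℚ) := by
    obtain ⟨c, hc⟩ := hmondvd
    have hmon : (minpoly ℚ θ).Monic := minpoly.monic hQint
    have hmon2 : (X ^ 3 - C (w : ℚ)).Monic := monic_X_pow_sub_C _ (by norm_num)
    have hd2 : (X ^ 3 - C (w : ℚ)).natDegree = 3 := by
      rw [natDegree_X_pow_sub_C]
    have hc0 : c ≠ 0 := by
      rintro rfl
      rw [mul_zero] at hc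
      exact hmon2.ne_zero hc
    have hcdeg : c.natDegree = 0 := by
      have := natDegree_mul (hmon.ne_zero) hc0
      rw [← hc, hd2, hdeg'] at this
      omega
    have hcmonic : c.Monic := by
      have hlc := hc ▸ hmon2.leadingCoeff
      rwa [leadingCoeff_mul, hmon.leadingCoeff, one_mul] at hlc
    have : c = 1 := hcmonic.natDegree_eq_zero.mp hcdeg
    rw [hc, this, mul_one]
  have hdisc := Algebra.discr_powerBasis_eq_norm (K := ℚ) (L := K) pb
  rw [hgen, hmp, hdeg] at hdisc
  have hder : derivative (X ^ 3 - C (w : ℚ)) = C 3 * X ^ 2 := by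
    simp [derivative_X_pow]
    rw [← C_1, ← C_add]; norm_num
  rw [hder] at hdisc
  have haev : aeval θ (C (3:ℚ) * X ^ 2) = 3 * θ ^ 2 := by
    simp
  rw [haev] at hdisc
  have hnorm3 : Algebra.norm ℚ (3 : K) = 27 := by
    have : (3 : K) = algebraMap ℚ K 3 := by norm_num
    rw [this, Algebra.norm_algebraMap, hdeg]
    norm_num
  have hnormθ : Algebra.norm ℚ θ = (w : ℚ) := by
    have hcube : (Algebra.norm ℚ θ) ^ 3 = (w : ℚ) ^ 3 := by
      rw [← map_pow, h3]
      rw [← map_intCast (algebraMap ℚ K) w, Algebra.norm_algebraMap, hdeg]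
    exact Odd.strictMono_pow (R := ℚ) ⟨1, by norm_num⟩ |>.injective hcube
  have hval : Algebra.discr ℚ pb.basis = ((-(27 * w ^ 2) : ℤ) : ℚ) := by
    rw [hdisc, _root_.map_mul, hnorm3, _root_.map_pow, hnormθ]
    push_cast
    norm_num
  have hbint : ∀ i, IsIntegral ℤ (pb.basis i) := by
    intro i
    rw [pb.basis_eq_pow]
    exact hint.pow _
  obtain ⟨r, hr⟩ := discr_dvd_of_basis K pb.basis hbint
  rw [hval] at hr
  have hZ : -(27 * w ^ 2) = r ^ 2 * NumberField.discr K := by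
    exact_mod_cast hr
  refine (dvd_neg).mp ?_
  exact ⟨r ^ 2, by rw [hZ]; ring⟩

lemma key_totally_ramified (K : Type*) [Field K] [NumberField K]
    (hdeg : Module.finrank ℚ K = 3) (θ0 : K) (u : ℤ) (hu : Odd u)
    (h3 : θ0 ^ 3 = ((2 * u : ℤ) : K)) :
    ∃ P : Ideal (𝓞 K), P.IsPrime ∧
      Ideal.span {(2 : 𝓞 K)} = P ^ 3 := by
  have hint : IsIntegral ℤ θ0 :=
    ⟨X ^ 3 - C (2 * u), monic_X_pow_sub_C _ (by norm_num),
      by rw [eval₂_sub, eval₂_pow, eval₂_X, eval₂_C, h3]; simp⟩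
  set θ : 𝓞 K := ⟨θ0, hint⟩ with hθdef
  have hθ : θ ^ 3 = ((2 * u : ℤ) : 𝓞 K) := by
    refine NumberField.RingOfIntegers.ext ?_
    have e1 : ((θ ^ 3 : 𝓞 K) : K) = θ0 ^ 3 := by
      push_cast
      rfl
    have e2 : (((2 * u : ℤ) : 𝓞 K) : K) = ((2 * u : ℤ) : K) :=
      map_intCast (algebraMap (𝓞 K) K) _
    rw [e1, e2, h3]
  have h2 : (2 : 𝓞 K) ≠ 0 := two_ne_zero
  have hu0 : u ≠ 0 := by rintro rfl; simp at hu
  have huO : ((u : ℤ) : 𝓞 K) ≠ 0 := Int.cast_ne_zero.mpr hu0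
  have hideal : Ideal.span {(2 : 𝓞 K)} * Ideal.span {((u : ℤ) : 𝓞 K)} =
      (Ideal.span {θ}) ^ 3 := by
    rw [Ideal.span_singleton_mul_span_singleton, Ideal.span_singleton_pow, hθ]
    push_cast
    rfl
  have ha : Associates.mk (Ideal.span {(2 : 𝓞 K)}) ≠ 0 := by
    rw [Associates.mk_ne_zero, Submodule.zero_eq_bot, Ne, Ideal.span_singleton_eq_bot]
    exact h2
  have hb : Associates.mk (Ideal.span {((u : ℤ) : 𝓞 K)}) ≠ 0 := by
    rw [Associates.mk_ne_zero, Submodule.zero_eq_bot, Ne, Ideal.span_singleton_eq_bot]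
    exact huO
  have hcop : ∀ d, d ∣ Associates.mk (Ideal.span {(2 : 𝓞 K)}) →
      d ∣ Associates.mk (Ideal.span {((u : ℤ) : 𝓞 K)}) → ¬ Prime d := by
    intro d hda hdb hp
    obtain ⟨D, rfl⟩ := Associates.mk_surjective d
    rw [Associates.mk_dvd_mk] at hda hdb
    have h2D : (2 : 𝓞 K) ∈ D := (Ideal.dvd_span_singleton).mp hda
    have huD : ((u : ℤ) : 𝓞 K) ∈ D := (Ideal.dvd_span_singleton).mp hdb
    obtain ⟨k, hk⟩ := hu
    have h1 : (1 : 𝓞 K) ∈ D := by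
      have : ((u : ℤ) : 𝓞 K) - (k : ℤ) * 2 = 1 := by
        rw [hk]; push_cast; ring
      rw [← this]
      exact Submodule.sub_mem _ huD (Ideal.mul_mem_left _ _ h2D)
    have : D = ⊤ := (Ideal.eq_top_iff_one D).mpr h1
    rw [Associates.prime_mk] at hp
    exact hp.not_unit (by rw [this]; exact Ideal.isUnit_iff.mpr rfl)
  obtain ⟨d, hd⟩ := Associates.eq_pow_of_mul_eq_pow ha hb hcop
    (by rw [Associates.mk_mul_mk, ← Associates.mk_pow, hideal])
  obtain ⟨D, rfl⟩ := Associates.mk_surjective d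
  rw [← Associates.mk_pow, Associates.mk_eq_mk_iff_associated, associated_iff_eq] at hd
  have hn : Ideal.absNorm (Ideal.span {(2 : 𝓞 K)}) = 8 := by
    rw [Ideal.absNorm_span_singleton]
    have h2' : (2 : 𝓞 K) = algebraMap ℤ (𝓞 K) 2 := by norm_num
    rw [h2', Algebra.norm_algebraMap_of_basis (RingOfIntegers.basis K)]
    have hc : Fintype.card (Module.Free.ChooseBasisIndex ℤ (𝓞 K)) = 3 := by
      rw [← Module.finrank_eq_card_chooseBasisIndex, NumberField.RingOfIntegers.rank, hdeg]
    rw [hc]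
    norm_num
  have hDn : Ideal.absNorm D ^ 3 = 2 ^ 3 := by
    rw [← map_pow, ← hd, hn]
    norm_num
  have hD2 : Ideal.absNorm D = 2 := by
    have := Nat.pow_left_injective (by norm_num) hDn
    simpa using this
  refine ⟨D, Ideal.isPrime_of_irreducible_absNorm ?_, hd⟩
  rw [hD2]
  exact Nat.prime_two

/-- If `K` is a pure cubic number field whose discriminant is `-3 f²` with `f`
even and positive, then the prime `2` is totally ramified in `K`:
`2·𝒪_K = 𝔭³` for some prime ideal `𝔭` of the ring of integers. -/
theorem two_totally_ramified_in_pure_cubic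
    (K : Type*) [Field K] [NumberField K]
    (hdeg : Module.finrank ℚ K = 3)
    (α : K) (hα : IntermediateField.adjoin ℚ {α} = ⊤)
    (q : ℚ) (hq : α ^ 3 = (q : K))
    (f : ℕ) (hf : 0 < f) (hfe : Even f)
    (hdisc : NumberField.discr K = -3 * (f : ℤ) ^ 2) :
    ∃ P : Ideal (NumberField.RingOfIntegers K), P.IsPrime ∧
      Ideal.span {(2 : NumberField.RingOfIntegers K)} = P ^ 3 := by
  have hα0 : α ≠ 0 := by
    rintro rfl
    have hbt : (⊥ : IntermediateField ℚ K) = ⊤ := by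
      rw [← IntermediateField.adjoin_zero (F := ℚ) (E := K)]
      exact hα
    have h1 : Module.finrank ℚ K = 1 := by
      rw [← IntermediateField.finrank_top' (F := ℚ) (E := K), ← hbt,
        IntermediateField.finrank_bot]
    omega
  have hq0 : q ≠ 0 := by
    rintro rfl
    rw [Rat.cast_zero] at hq
    exact hα0 ((pow_eq_zero_iff (by norm_num : (3:ℕ) ≠ 0)).mp hq)
  have hden0 : ((q.den : ℚ)) ≠ 0 := Nat.cast_ne_zero.mpr q.den_ne_zero
  set β : K := algebraMap ℚ K (q.den : ℚ) * α with hβdef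
  set N : ℤ := q.num * (q.den : ℤ) ^ 2 with hNdef
  have hratio : ((q.den : ℚ)) ^ 3 * q = ((N : ℤ) : ℚ) := by
    have h := Rat.num_div_den q
    have h3 : (q.num : ℚ) = q * q.den := (div_eq_iff hden0).mp h
    rw [hNdef]
    push_cast
    rw [h3]
    ring
  have hβ : β ^ 3 = ((N : ℤ) : K) := by
    rw [hβdef, mul_pow, hq, ← map_pow]
    rw [show ((q : ℚ) : K) = algebraMap ℚ K q from (eq_ratCast (algebraMap ℚ K) q).symm]
    rw [← _root_.map_mul, hratio]
    rw [eq_ratCast (algebraMap ℚ K) _]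
    push_cast
    rfl
  have hN : N ≠ 0 := by
    rw [hNdef]
    exact mul_ne_zero (Rat.num_ne_zero.mpr hq0)
      (pow_ne_zero _ (Int.natCast_ne_zero.mpr q.den_ne_zero))
  obtain ⟨v, w, hw, hNe⟩ := exists_two_pow_mul_odd N hN
  have h2K : (2 : K) ≠ 0 := two_ne_zero
  set k := v / 3 with hk
  have h2k : ((2 : K) ^ k) ≠ 0 := pow_ne_zero _ h2K
  have hr3 : v % 3 = 0 ∨ v % 3 = 1 ∨ v % 3 = 2 := by omega
  rcases hr3 with hr | hr | hr
  · -- contradiction case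
    exfalso
    have hv : v = 3 * k := by omega
    set θ0 : K := β / (2 : K) ^ k with hθ0def
    have hθ3 : θ0 ^ 3 = ((w : ℤ) : K) := by
      rw [hθ0def, div_pow, hβ, hNe, hv]
      push_cast
      field_simp
      ring
    have htop : IntermediateField.adjoin ℚ {θ0} = ⊤ := by
      rw [eq_top_iff, ← hα]
      apply IntermediateField.adjoin_le_iff.mpr
      intro x hx
      rw [Set.mem_singleton_iff] at hx
      rw [hx]
      have hαval : α = algebraMap ℚ K ((2 : ℚ) ^ k / (q.den : ℚ)) * θ0 := by
        rw [hθ0def, hβdef, map_div₀, map_pow]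
        have h2a : algebraMap ℚ K 2 = 2 := by norm_num
        rw [h2a]
        have hdenK : algebraMap ℚ K (q.den : ℚ) ≠ 0 := by
          simpa using hden0
        field_simp
      rw [hαval]
      exact mul_mem (IntermediateField.algebraMap_mem _ _)
        (IntermediateField.mem_adjoin_simple_self ℚ θ0)
    have hdvd := discrK_dvd_of_cube K hdeg θ0 htop w hθ3
    rw [hdisc] at hdvd
    obtain ⟨g, hg⟩ := hfe
    have h2d : (2 : ℤ) ∣ -3 * (f : ℤ) ^ 2 := ⟨-6 * (g : ℤ) ^ 2, by
      rw [hg]; push_cast; ring⟩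
    have h2w : (2 : ℤ) ∣ 27 * w ^ 2 := dvd_trans h2d hdvd
    obtain ⟨c, hc⟩ := h2w
    have hodd : Odd (27 * w ^ 2) := Odd.mul (⟨13, by norm_num⟩ : Odd (27 : ℤ)) (hw.pow)
    rw [hc] at hodd
    exact ((Int.not_odd_iff_even.mpr (even_two_mul c))) hodd
  · -- v = 3k + 1
    have hv : v = 3 * k + 1 := by omega
    set θ0 : K := β / (2 : K) ^ k with hθ0def
    have hθ3 : θ0 ^ 3 = ((2 * w : ℤ) : K) := by
      rw [hθ0def, div_pow, hβ, hNe, hv]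
      push_cast
      field_simp
      ring
    exact key_totally_ramified K hdeg θ0 w hw hθ3
  · -- v = 3k + 2
    have hv : v = 3 * k + 2 := by omega
    set θ0 : K := β ^ 2 / (2 : K) ^ (2 * k + 1) with hθ0def
    have hβ6 : (β ^ 2) ^ 3 = ((N ^ 2 : ℤ) : K) := by
      rw [← pow_mul, mul_comm 2 3, pow_mul, hβ]
      push_cast
      ring
    have hθ3 : θ0 ^ 3 = ((2 * w ^ 2 : ℤ) : K) := by
      rw [hθ0def, div_pow, hβ6, hNe, hv]
      push_cast
      field_simp
      ring
    exact key_totally_ramified K hdeg θ0 (w ^ 2) (hw.pow) hθ3
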